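/- For every real r and every real y, cosh(2r·arcsinh(y)) = Σ_{k=0}^∞ c_k(r) (2y)^{2k}/(2k)!, where c_0(r) = 1 and c_k(r) = r² · ∏_{j=1}^{k−1} (r² − j²) for k ≥ 1, the series converging for |y| sufficiently small (e.g. |y| < 1/2). -/

import Mathlib

/-- Coefficients `c_k(r)`: `c_0 = 1`, `c_k = r² ∏_{j=1}^{k-1} (r² - j²)` for `k ≥ 1`. -/
def coshCoeff (r : ℝ) : ℕ → ℝ
  | 0 => 1
  | k + 1 => r ^ 2 * ∏ j ∈ Finset.range k, (r ^ 2 - ((j : ℝ) + 1) ^ 2)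

namespace CoshAux

open Real Filter Set

lemma coshCoeff_succ (r : ℝ) (k : ℕ) :
    coshCoeff r (k + 1) = (r ^ 2 - (k : ℝ) ^ 2) * coshCoeff r k := by
  cases k with
  | zero => simp [coshCoeff]
  | succ n =>
      simp only [coshCoeff, Finset.prod_range_succ]
      push_cast
      ring

/-- `B r k` is the coefficient of `x^(2k)` in the series. -/
noncomputable def B (r : ℝ) (k : ℕ) : ℝ :=
  coshCoeff r k * 4 ^ k / (Nat.factorial (2 * k) : ℝ)

lemma B_zero (r : ℝ) : B r 0 = 1 := by simp [B, coshCoeff]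

lemma factorial_two_succ (k : ℕ) :
    (Nat.factorial (2 * (k + 1)) : ℝ)
      = (2 * (k : ℝ) + 2) * ((2 * (k : ℝ) + 1) * (Nat.factorial (2 * k) : ℝ)) := by
  have h : 2 * (k + 1) = (2 * k + 1) + 1 := by ring
  rw [h, Nat.factorial_succ, Nat.factorial_succ]
  push_cast
  ring

lemma B_succ (r : ℝ) (k : ℕ) :
    (2 * (k : ℝ) + 1) * (2 * (k : ℝ) + 2) * B r (k + 1)
      = 4 * (r ^ 2 - (k : ℝ) ^ 2) * B r k := by
  have hfac : (Nat.factorial (2 * k) : ℝ) ≠ 0 := by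
    exact_mod_cast (Nat.factorial_pos (2 * k)).ne'
  have h1 : (2 * (k : ℝ) + 1) ≠ 0 := by positivity
  have h2 : (2 * (k : ℝ) + 2) ≠ 0 := by positivity
  rw [B, B, coshCoeff_succ, factorial_two_succ]
  field_simp
  ring

/-- Dominating sequence for the series of second derivatives on `|x| ≤ 3/4`. -/
noncomputable def U (r : ℝ) (k : ℕ) : ℝ :=
  (2 * (k : ℝ) + 1) * (2 * (k : ℝ) + 2) * |B r (k + 1)| * (3 / 4 : ℝ) ^ (2 * k)

lemma U_nonneg (r : ℝ) (k : ℕ) : 0 ≤ U r k := by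
  unfold U; positivity

lemma U_succ_le (r : ℝ) : ∀ᶠ k in atTop, U r (k + 1) ≤ (9 / 10) * U r k := by
  rw [eventually_atTop]
  refine ⟨max 2 (Nat.ceil (r ^ 2)), fun k hk => ?_⟩
  have hk2 : (2 : ℕ) ≤ k := le_trans (le_max_left _ _) hk
  have hkr : r ^ 2 ≤ (k : ℝ) := by
    calc r ^ 2 ≤ (Nat.ceil (r ^ 2) : ℝ) := Nat.le_ceil _
    _ ≤ (k : ℝ) := by exact_mod_cast le_trans (le_max_right _ _) hk
  have hk2' : (2 : ℝ) ≤ (k : ℝ) := by exact_mod_cast hk2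
  -- |B r (k+2)| relation
  have habs : (2 * ((k : ℝ) + 1) + 1) * (2 * ((k : ℝ) + 1) + 2) * |B r (k + 2)|
      = 4 * |r ^ 2 - ((k : ℝ) + 1) ^ 2| * |B r (k + 1)| := by
    have := B_succ r (k + 1)
    push_cast at this ⊢
    have h1 : (0 : ℝ) ≤ (2 * ((k : ℝ) + 1) + 1) * (2 * ((k : ℝ) + 1) + 2) := by positivity
    calc (2 * ((k : ℝ) + 1) + 1) * (2 * ((k : ℝ) + 1) + 2) * |B r (k + 2)|
        = |(2 * ((k : ℝ) + 1) + 1) * (2 * ((k : ℝ) + 1) + 2) * B r (k + 2)| := by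
          rw [abs_mul, abs_of_nonneg h1]
      _ = |4 * (r ^ 2 - ((k : ℝ) + 1) ^ 2) * B r (k + 1)| := by rw [this]
      _ = 4 * |r ^ 2 - ((k : ℝ) + 1) ^ 2| * |B r (k + 1)| := by
          rw [abs_mul, abs_mul]; norm_num
  have hUsucc : U r (k + 1)
      = (9 / 4) * |r ^ 2 - ((k : ℝ) + 1) ^ 2| * |B r (k + 1)| * (3 / 4 : ℝ) ^ (2 * k) := by
    unfold U
    have hpow : (3 / 4 : ℝ) ^ (2 * (k + 1)) = (9 / 16) * (3 / 4 : ℝ) ^ (2 * k) := by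
      have : 2 * (k + 1) = 2 * k + 2 := by ring
      rw [this, pow_add]; ring
    push_cast
    rw [hpow]
    push_cast at habs
    nlinarith [habs, pow_nonneg (by norm_num : (0:ℝ) ≤ 3/4) (2 * k)]
  rw [hUsucc]
  unfold U
  have habs2 : |r ^ 2 - ((k : ℝ) + 1) ^ 2| ≤ (k : ℝ) + ((k : ℝ) + 1) ^ 2 := by
    have := abs_sub (r ^ 2) (((k : ℝ) + 1) ^ 2)
    calc |r ^ 2 - ((k : ℝ) + 1) ^ 2| ≤ |r ^ 2| + |((k : ℝ) + 1) ^ 2| := abs_sub _ _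
      _ = r ^ 2 + ((k : ℝ) + 1) ^ 2 := by rw [abs_of_nonneg (by positivity), abs_of_nonneg (by positivity)]
      _ ≤ (k : ℝ) + ((k : ℝ) + 1) ^ 2 := by linarith
  have hBnn : (0 : ℝ) ≤ |B r (k + 1)| := abs_nonneg _
  have hpnn : (0 : ℝ) ≤ (3 / 4 : ℝ) ^ (2 * k) := by positivity
  have key : (9 / 4) * |r ^ 2 - ((k : ℝ) + 1) ^ 2|
      ≤ (9 / 10) * ((2 * (k : ℝ) + 1) * (2 * (k : ℝ) + 2)) := by
    nlinarith [habs2, hk2']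
  nlinarith [mul_nonneg hBnn hpnn, key]

lemma summable_U (r : ℝ) : Summable (U r) := by
  refine summable_of_ratio_norm_eventually_le (by norm_num : (9 / 10 : ℝ) < 1) ?_
  filter_upwards [U_succ_le r] with k hk
  rw [Real.norm_eq_abs, Real.norm_eq_abs, abs_of_nonneg (U_nonneg r _),
    abs_of_nonneg (U_nonneg r _)]
  exact hk

/-- Bound on the `F`-terms. -/
noncomputable def UF (r : ℝ) (k : ℕ) : ℝ := |B r k| * (3 / 4 : ℝ) ^ (2 * k)

lemma UF_succ_le_U (r : ℝ) (k : ℕ) : UF r (k + 1) ≤ U r k := by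
  unfold UF U
  have h1 : (3 / 4 : ℝ) ^ (2 * (k + 1)) ≤ (3 / 4 : ℝ) ^ (2 * k) := by
    apply pow_le_pow_of_le_one (by norm_num) (by norm_num)
    omega
  have h2 : (1 : ℝ) ≤ (2 * (k : ℝ) + 1) * (2 * (k : ℝ) + 2) := by nlinarith [Nat.cast_nonneg (α := ℝ) k]
  have hq : (0 : ℝ) ≤ (3 / 4 : ℝ) ^ (2 * k) := by positivity
  nlinarith [mul_le_mul_of_nonneg_left h1 (abs_nonneg (B r (k + 1))),
    mul_le_mul_of_nonneg_right h2 (mul_nonneg (abs_nonneg (B r (k + 1))) hq)]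

lemma summable_UF (r : ℝ) : Summable (UF r) := by
  rw [← summable_nat_add_iff 1]
  exact (summable_U r).of_nonneg_of_le (fun k => by unfold UF; positivity)
    (fun k => UF_succ_le_U r k)

/-- The sum function and its term-by-term derivatives. -/
noncomputable def F (r x : ℝ) : ℝ := ∑' k : ℕ, B r k * x ^ (2 * k)

noncomputable def G (r x : ℝ) : ℝ :=
  ∑' k : ℕ, (2 * (k : ℝ) + 2) * B r (k + 1) * x ^ (2 * k + 1)

noncomputable def H (r x : ℝ) : ℝ :=
  ∑' k : ℕ, (2 * (k : ℝ) + 1) * (2 * (k : ℝ) + 2) * B r (k + 1) * x ^ (2 * k)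

lemma bound_F (r : ℝ) {x : ℝ} (hx : |x| ≤ 3 / 4) (k : ℕ) :
    ‖B r k * x ^ (2 * k)‖ ≤ UF r k := by
  rw [Real.norm_eq_abs, abs_mul, abs_pow]
  unfold UF
  exact mul_le_mul_of_nonneg_left (pow_le_pow_left₀ (abs_nonneg x) hx _) (abs_nonneg _)

lemma bound_G (r : ℝ) {x : ℝ} (hx : |x| ≤ 3 / 4) (k : ℕ) :
    ‖(2 * (k : ℝ) + 2) * B r (k + 1) * x ^ (2 * k + 1)‖ ≤ U r k := by
  rw [Real.norm_eq_abs, abs_mul, abs_mul, abs_pow]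
  unfold U
  have h1 : |x| ^ (2 * k + 1) ≤ (3 / 4 : ℝ) ^ (2 * k) := by
    calc |x| ^ (2 * k + 1) ≤ (3 / 4 : ℝ) ^ (2 * k + 1) := pow_le_pow_left₀ (abs_nonneg x) hx _
      _ ≤ (3 / 4 : ℝ) ^ (2 * k) := pow_le_pow_of_le_one (by norm_num) (by norm_num) (by omega)
  have h2 : |(2 * (k : ℝ) + 2)| = 2 * (k : ℝ) + 2 := abs_of_nonneg (by positivity)
  rw [h2]
  have h3 : (2 * (k : ℝ) + 2) ≤ (2 * (k : ℝ) + 1) * (2 * (k : ℝ) + 2) := by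
    nlinarith [Nat.cast_nonneg (α := ℝ) k]
  have hq : (0 : ℝ) ≤ (3 / 4 : ℝ) ^ (2 * k) := by positivity
  nlinarith [mul_le_mul_of_nonneg_left h1 (mul_nonneg (by positivity : (0:ℝ) ≤ 2 * (k:ℝ) + 2) (abs_nonneg (B r (k + 1)))),
    mul_le_mul_of_nonneg_right (mul_le_mul_of_nonneg_right h3 (abs_nonneg (B r (k + 1)))) hq]

lemma bound_H (r : ℝ) {x : ℝ} (hx : |x| ≤ 3 / 4) (k : ℕ) :
    ‖(2 * (k : ℝ) + 1) * (2 * (k : ℝ) + 2) * B r (k + 1) * x ^ (2 * k)‖ ≤ U r k := by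
  rw [Real.norm_eq_abs, abs_mul, abs_mul, abs_mul, abs_pow]
  unfold U
  have h1 : |x| ^ (2 * k) ≤ (3 / 4 : ℝ) ^ (2 * k) := pow_le_pow_left₀ (abs_nonneg x) hx _
  have h2 : |(2 * (k : ℝ) + 1)| = 2 * (k : ℝ) + 1 := abs_of_nonneg (by positivity)
  have h3 : |(2 * (k : ℝ) + 2)| = 2 * (k : ℝ) + 2 := abs_of_nonneg (by positivity)
  rw [h2, h3]
  nlinarith [mul_le_mul_of_nonneg_left h1
    (mul_nonneg (mul_nonneg (by positivity : (0:ℝ) ≤ 2*(k:ℝ)+1) (by positivity : (0:ℝ) ≤ 2*(k:ℝ)+2)) (abs_nonneg (B r (k+1))))]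

lemma summable_F (r : ℝ) {x : ℝ} (hx : |x| ≤ 3 / 4) :
    Summable (fun k : ℕ => B r k * x ^ (2 * k)) :=
  (summable_UF r).of_norm_bounded (bound_F r hx)

lemma summable_G (r : ℝ) {x : ℝ} (hx : |x| ≤ 3 / 4) :
    Summable (fun k : ℕ => (2 * (k : ℝ) + 2) * B r (k + 1) * x ^ (2 * k + 1)) :=
  (summable_U r).of_norm_bounded (bound_G r hx)

lemma summable_H (r : ℝ) {x : ℝ} (hx : |x| ≤ 3 / 4) :
    Summable (fun k : ℕ => (2 * (k : ℝ) + 1) * (2 * (k : ℝ) + 2) * B r (k + 1) * x ^ (2 * k)) :=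
  (summable_U r).of_norm_bounded (bound_H r hx)

lemma summable_sq (r : ℝ) {x : ℝ} (hx : |x| ≤ 3 / 4) :
    Summable (fun k : ℕ => (2 * (k : ℝ) + 2) ^ 2 * B r (k + 1) * x ^ (2 * k + 2)) := by
  refine ((summable_U r).mul_left 2).of_norm_bounded (fun k => ?_)
  rw [Real.norm_eq_abs, abs_mul, abs_mul, abs_pow, abs_pow]
  have h1 : |x| ^ (2 * k + 2) ≤ (3 / 4 : ℝ) ^ (2 * k) := by
    calc |x| ^ (2 * k + 2) ≤ (3 / 4 : ℝ) ^ (2 * k + 2) := pow_le_pow_left₀ (abs_nonneg x) hx _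
      _ ≤ (3 / 4 : ℝ) ^ (2 * k) := pow_le_pow_of_le_one (by norm_num) (by norm_num) (by omega)
  have h2 : |(2 * (k : ℝ) + 2)| ^ 2 = (2 * (k : ℝ) + 2) ^ 2 := by
    rw [abs_of_nonneg (by positivity : (0:ℝ) ≤ 2 * (k : ℝ) + 2)]
  rw [h2]
  unfold U
  have h3 : (2 * (k : ℝ) + 2) ^ 2 ≤ 2 * ((2 * (k : ℝ) + 1) * (2 * (k : ℝ) + 2)) := by
    nlinarith [Nat.cast_nonneg (α := ℝ) k]
  have hb := abs_nonneg (B r (k + 1))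
  have hp := pow_nonneg (abs_nonneg x) (2 * k + 2)
  have hq := pow_nonneg (by norm_num : (0:ℝ) ≤ 3/4) (2 * k)
  calc (2 * (k : ℝ) + 2) ^ 2 * |B r (k + 1)| * |x| ^ (2 * k + 2)
      ≤ (2 * (k : ℝ) + 2) ^ 2 * |B r (k + 1)| * (3 / 4 : ℝ) ^ (2 * k) := by
        apply mul_le_mul_of_nonneg_left h1; positivity
    _ ≤ 2 * ((2 * (k : ℝ) + 1) * (2 * (k : ℝ) + 2)) * |B r (k + 1)| * (3 / 4 : ℝ) ^ (2 * k) := by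
        apply mul_le_mul_of_nonneg_right (mul_le_mul_of_nonneg_right h3 hb) hq
    _ = 2 * ((2 * (k : ℝ) + 1) * (2 * (k : ℝ) + 2) * |B r (k + 1)| * (3 / 4 : ℝ) ^ (2 * k)) := by
        ring

/-- The ODE satisfied by the series: `(1+x²) H + x G = 4 r² F`. -/
lemma ode (r : ℝ) {x : ℝ} (hx : |x| ≤ 3 / 4) :
    (1 + x ^ 2) * H r x + x * G r x = 4 * r ^ 2 * F r x := by
  have hsF := summable_F r hx
  have hsG := summable_G r hx
  have hsH := summable_H r hx
  have hsq := summable_sq r hx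
  -- The series ∑ 4 k² B k x^{2k}
  have hshift : Summable (fun k : ℕ => 4 * ((k : ℝ)) ^ 2 * B r k * x ^ (2 * k)) := by
    rw [← summable_nat_add_iff 1]
    refine hsq.congr (fun k => ?_)
    push_cast
    ring_nf
  have key : ∀ k : ℕ, 4 * r ^ 2 * (B r k * x ^ (2 * k))
      = (2 * (k : ℝ) + 1) * (2 * (k : ℝ) + 2) * B r (k + 1) * x ^ (2 * k)
        + 4 * ((k : ℝ)) ^ 2 * B r k * x ^ (2 * k) := by
    intro k
    have hbs := B_succ r k
    linear_combination (-(x ^ (2 * k))) * hbs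
  have step1 : 4 * r ^ 2 * F r x
      = H r x + ∑' k : ℕ, 4 * ((k : ℝ)) ^ 2 * B r k * x ^ (2 * k) := by
    unfold F H
    rw [← tsum_mul_left]
    rw [← Summable.tsum_add hsH hshift]
    exact tsum_congr key
  have step2 : ∑' k : ℕ, 4 * ((k : ℝ)) ^ 2 * B r k * x ^ (2 * k)
      = x ^ 2 * H r x + x * G r x := by
    rw [Summable.tsum_eq_zero_add hshift]
    simp only [Nat.cast_zero]
    have h0 : 4 * (0 : ℝ) ^ 2 * B r 0 * x ^ (2 * 0) = 0 := by ring
    rw [h0, zero_add]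
    unfold H G
    rw [← tsum_mul_left, ← tsum_mul_left, ← Summable.tsum_add (hsH.mul_left _) (hsG.mul_left _)]
    refine tsum_congr (fun k => ?_)
    push_cast
    ring
  rw [step1, step2]
  ring

lemma F_zero (r : ℝ) : F r 0 = 1 := by
  unfold F
  rw [tsum_eq_single 0]
  · simp [B_zero]
  · intro k hk
    have : 2 * k ≠ 0 := by omega
    simp [zero_pow this]

lemma G_zero (r : ℝ) : G r 0 = 0 := by
  unfold G
  have : ∀ k : ℕ, (2 * (k : ℝ) + 2) * B r (k + 1) * (0:ℝ) ^ (2 * k + 1) = 0 := by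
    intro k
    simp [zero_pow (by omega : 2 * k + 1 ≠ 0)]
  simp [this]

/-- Term-by-term differentiation: `F' = G` on the ball. -/
lemma hasDerivAt_F (r : ℝ) {x : ℝ} (hx : x ∈ Metric.ball (0 : ℝ) (3 / 4)) :
    HasDerivAt (F r) (G r x) x := by
  have hball : ∀ z : ℝ, z ∈ Metric.ball (0 : ℝ) (3 / 4) → |z| ≤ 3 / 4 := by
    intro z hz
    rw [Metric.mem_ball, Real.dist_eq, sub_zero] at hz
    exact hz.le
  refine hasDerivAt_of_tendstoUniformlyOn (l := Filter.atTop) (f := fun N x => ∑ k ∈ Finset.range (N + 1), B r k * x ^ (2 * k))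
    (f' := fun N x => ∑ k ∈ Finset.range N, (2 * (k : ℝ) + 2) * B r (k + 1) * x ^ (2 * k + 1))
    Metric.isOpen_ball ?_ ?_ ?_ hx
  · exact tendstoUniformlyOn_tsum_nat (summable_U r) (fun k z hz => bound_G r (hball z hz) k)
  · refine Eventually.of_forall (fun N z _ => ?_)
    show HasDerivAt (fun x : ℝ => ∑ k ∈ Finset.range (N + 1), B r k * x ^ (2 * k))
      (∑ k ∈ Finset.range N, (2 * (k : ℝ) + 2) * B r (k + 1) * z ^ (2 * k + 1)) z
    have hrw : (fun x : ℝ => ∑ k ∈ Finset.range (N + 1), B r k * x ^ (2 * k))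
        = fun x : ℝ => (∑ k ∈ Finset.range N, B r (k + 1) * x ^ (2 * (k + 1))) + B r 0 := by
      funext x
      rw [Finset.sum_range_succ']
      simp
    rw [hrw]
    apply HasDerivAt.add_const
    apply HasDerivAt.fun_sum
    intro k _
    have hp := (hasDerivAt_pow (2 * (k + 1)) z).const_mul (B r (k + 1))
    refine hp.congr_deriv ?_
    have h1 : 2 * (k + 1) - 1 = 2 * k + 1 := by omega
    rw [h1]
    push_cast
    ring
  · intro z hz
    have hsum := summable_F r (hball z hz)
    have := hsum.hasSum.tendsto_sum_nat
    exact this.comp (tendsto_add_atTop_nat 1)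

/-- Term-by-term differentiation: `G' = H` on the ball. -/
lemma hasDerivAt_G (r : ℝ) {x : ℝ} (hx : x ∈ Metric.ball (0 : ℝ) (3 / 4)) :
    HasDerivAt (G r) (H r x) x := by
  have hball : ∀ z : ℝ, z ∈ Metric.ball (0 : ℝ) (3 / 4) → |z| ≤ 3 / 4 := by
    intro z hz
    rw [Metric.mem_ball, Real.dist_eq, sub_zero] at hz
    exact hz.le
  refine hasDerivAt_of_tendstoUniformlyOn (l := Filter.atTop)
    (f := fun N x => ∑ k ∈ Finset.range N, (2 * (k : ℝ) + 2) * B r (k + 1) * x ^ (2 * k + 1))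
    (f' := fun N x => ∑ k ∈ Finset.range N,
      (2 * (k : ℝ) + 1) * (2 * (k : ℝ) + 2) * B r (k + 1) * x ^ (2 * k))
    Metric.isOpen_ball ?_ ?_ ?_ hx
  · exact tendstoUniformlyOn_tsum_nat (summable_U r) (fun k z hz => bound_H r (hball z hz) k)
  · refine Eventually.of_forall (fun N z _ => ?_)
    show HasDerivAt (fun x : ℝ => ∑ k ∈ Finset.range N, (2 * (k : ℝ) + 2) * B r (k + 1) * x ^ (2 * k + 1))
      (∑ k ∈ Finset.range N, (2 * (k : ℝ) + 1) * (2 * (k : ℝ) + 2) * B r (k + 1) * z ^ (2 * k)) z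
    apply HasDerivAt.fun_sum
    intro k _
    have hp := hasDerivAt_pow (2 * k + 1) z
    have := hp.const_mul ((2 * (k : ℝ) + 2) * B r (k + 1))
    refine this.congr_deriv ?_
    have h1 : 2 * k + 1 - 1 = 2 * k := by omega
    rw [h1]
    push_cast
    ring
  · intro z hz
    exact (summable_G r (hball z hz)).hasSum.tendsto_sum_nat

/-- Constancy on an open interval. -/
lemma const_of_deriv_zero {T : ℝ} {f : ℝ → ℝ}
    (h : ∀ t ∈ Ioo (-T) T, HasDerivAt f 0 t) {a b : ℝ}
    (ha : a ∈ Ioo (-T) T) (hb : b ∈ Ioo (-T) T) : f a = f b := by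
  refine (convex_Ioo (-T) T).is_const_of_fderivWithin_eq_zero (𝕜 := ℝ)
    (fun t ht => ((h t ht).differentiableAt).differentiableWithinAt) (fun t ht => ?_) ha hb
  rw [fderivWithin_of_isOpen isOpen_Ioo ht]
  have h2 : fderiv ℝ f t = ContinuousLinearMap.smulRight (1 : ℝ →L[ℝ] ℝ) 0 :=
    (h t ht).hasFDerivAt.fderiv
  rw [h2]
  exact ContinuousLinearMap.ext fun z => by simp

end CoshAux

open CoshAux Real Set in
theorem cosh_two_r_arsinh_series (r y : ℝ) (hy : |y| < 1 / 2) :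
    HasSum
      (fun k : ℕ => coshCoeff r k * (2 * y) ^ (2 * k) / (Nat.factorial (2 * k) : ℝ))
      (Real.cosh (2 * r * Real.arsinh y)) := by
  classical
  set T : ℝ := Real.arsinh (1 / 2) with hT
  have hT_pos : 0 < T := by
    rw [hT, ← Real.arsinh_zero]
    exact Real.arsinh_lt_arsinh.2 (by norm_num)
  have h0mem : (0 : ℝ) ∈ Ioo (-T) T := ⟨by linarith, hT_pos⟩
  have hmem_ball : ∀ t ∈ Ioo (-T) T, Real.sinh t ∈ Metric.ball (0 : ℝ) (3 / 4) := by
    intro t ht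
    rw [Metric.mem_ball, Real.dist_eq, sub_zero]
    have h2 : |t| < T := abs_lt.2 ⟨ht.1, ht.2⟩
    have h3 : Real.sinh |t| < Real.sinh T := Real.sinh_lt_sinh.2 h2
    rw [hT, Real.sinh_arsinh] at h3
    rw [Real.abs_sinh]
    linarith
  have hmem_le : ∀ t ∈ Ioo (-T) T, |Real.sinh t| ≤ 3 / 4 := by
    intro t ht
    have := hmem_ball t ht
    rw [Metric.mem_ball, Real.dist_eq, sub_zero] at this
    exact this.le
  -- first derivative of F ∘ sinh
  have hD1 : ∀ t ∈ Ioo (-T) T,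
      HasDerivAt (fun t => F r (Real.sinh t)) (Real.cosh t * G r (Real.sinh t)) t := by
    intro t ht
    have h1 := (hasDerivAt_F r (hmem_ball t ht)).comp t (Real.hasDerivAt_sinh t)
    simpa [Function.comp_def, mul_comm] using h1
  -- second derivative
  have hD2 : ∀ t ∈ Ioo (-T) T,
      HasDerivAt (fun t => Real.cosh t * G r (Real.sinh t))
        (4 * r ^ 2 * F r (Real.sinh t)) t := by
    intro t ht
    have hG : HasDerivAt (fun t => G r (Real.sinh t))
        (H r (Real.sinh t) * Real.cosh t) t := by
      simpa [Function.comp_def] using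
        (hasDerivAt_G r (hmem_ball t ht)).comp t (Real.hasDerivAt_sinh t)
    have hmul := (Real.hasDerivAt_cosh t).mul hG
    have heq : Real.sinh t * G r (Real.sinh t)
        + Real.cosh t * (H r (Real.sinh t) * Real.cosh t)
        = 4 * r ^ 2 * F r (Real.sinh t) := by
      have hode := ode r (hmem_le t ht)
      have hc : Real.cosh t ^ 2 = Real.sinh t ^ 2 + 1 := Real.cosh_sq t
      linear_combination hode + H r (Real.sinh t) * hc
    rw [← heq]
    exact hmul
  have hlin : ∀ t : ℝ, HasDerivAt (fun x : ℝ => 2 * r * x) (2 * r) t := by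
    intro t
    simpa using (hasDerivAt_id t).const_mul (2 * r)
  -- the difference g and its derivative
  have hDg : ∀ t ∈ Ioo (-T) T,
      HasDerivAt (fun t => F r (Real.sinh t) - Real.cosh (2 * r * t))
        (Real.cosh t * G r (Real.sinh t) - 2 * r * Real.sinh (2 * r * t)) t := by
    intro t ht
    refine (hD1 t ht).sub ?_
    have := (hlin t).cosh
    simpa [mul_comm] using this
  have hDG1 : ∀ t ∈ Ioo (-T) T,
      HasDerivAt (fun t => Real.cosh t * G r (Real.sinh t) - 2 * r * Real.sinh (2 * r * t))
        (4 * r ^ 2 * (F r (Real.sinh t) - Real.cosh (2 * r * t))) t := by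
    intro t ht
    have h2 : HasDerivAt (fun t => 2 * r * Real.sinh (2 * r * t))
        (4 * r ^ 2 * Real.cosh (2 * r * t)) t := by
      have := ((hlin t).sinh).const_mul (2 * r)
      refine this.congr_deriv ?_
      ring
    have := (hD2 t ht).sub h2
    refine this.congr_deriv ?_
    ring
  -- the auxiliary functions u and v have zero derivative
  have hDu : ∀ t ∈ Ioo (-T) T,
      HasDerivAt (fun t => ((Real.cosh t * G r (Real.sinh t) - 2 * r * Real.sinh (2 * r * t))
          - 2 * r * (F r (Real.sinh t) - Real.cosh (2 * r * t))) * Real.exp (2 * r * t)) 0 t := by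
    intro t ht
    have hexp : HasDerivAt (fun t : ℝ => Real.exp (2 * r * t))
        (Real.exp (2 * r * t) * (2 * r)) t := (hlin t).exp
    have h1 := ((hDG1 t ht).sub ((hDg t ht).const_mul (2 * r))).mul hexp
    refine h1.congr_deriv ?_
    simp only [Pi.sub_apply, Pi.add_apply]
    ring
  have hDv : ∀ t ∈ Ioo (-T) T,
      HasDerivAt (fun t => ((Real.cosh t * G r (Real.sinh t) - 2 * r * Real.sinh (2 * r * t))
          + 2 * r * (F r (Real.sinh t) - Real.cosh (2 * r * t))) * Real.exp (-(2 * r * t))) 0 t := by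
    intro t ht
    have hexp : HasDerivAt (fun t : ℝ => Real.exp (-(2 * r * t)))
        (Real.exp (-(2 * r * t)) * -(2 * r)) t := ((hlin t).neg).exp
    have h1 := ((hDG1 t ht).add ((hDg t ht).const_mul (2 * r))).mul hexp
    refine h1.congr_deriv ?_
    simp only [Pi.sub_apply, Pi.add_apply]
    ring
  -- values at 0
  have hg0 : F r (Real.sinh 0) - Real.cosh (2 * r * 0) = 0 := by
    simp [Real.sinh_zero, Real.cosh_zero, F_zero]
  have hG10 : Real.cosh 0 * G r (Real.sinh 0) - 2 * r * Real.sinh (2 * r * 0) = 0 := by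
    simp [Real.sinh_zero, Real.cosh_zero, G_zero]
  -- u and v vanish on the interval
  have huz : ∀ t ∈ Ioo (-T) T,
      (Real.cosh t * G r (Real.sinh t) - 2 * r * Real.sinh (2 * r * t))
        - 2 * r * (F r (Real.sinh t) - Real.cosh (2 * r * t)) = 0 := by
    intro t ht
    have h1 := const_of_deriv_zero hDu ht h0mem
    have h2 : ((Real.cosh t * G r (Real.sinh t) - 2 * r * Real.sinh (2 * r * t))
        - 2 * r * (F r (Real.sinh t) - Real.cosh (2 * r * t))) * Real.exp (2 * r * t) = 0 := by
      simpa [F_zero, G_zero] using h1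
    have hne := Real.exp_ne_zero (2 * r * t)
    exact (mul_eq_zero.1 h2).resolve_right hne
  have hvz : ∀ t ∈ Ioo (-T) T,
      (Real.cosh t * G r (Real.sinh t) - 2 * r * Real.sinh (2 * r * t))
        + 2 * r * (F r (Real.sinh t) - Real.cosh (2 * r * t)) = 0 := by
    intro t ht
    have h1 := const_of_deriv_zero hDv ht h0mem
    have h2 : ((Real.cosh t * G r (Real.sinh t) - 2 * r * Real.sinh (2 * r * t))
        + 2 * r * (F r (Real.sinh t) - Real.cosh (2 * r * t))) * Real.exp (-(2 * r * t)) = 0 := by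
      simpa [F_zero, G_zero] using h1
    have hne := Real.exp_ne_zero (-(2 * r * t))
    exact (mul_eq_zero.1 h2).resolve_right hne
  have hG1z : ∀ t ∈ Ioo (-T) T,
      Real.cosh t * G r (Real.sinh t) - 2 * r * Real.sinh (2 * r * t) = 0 := by
    intro t ht
    have h1 := huz t ht
    have h2 := hvz t ht
    linarith
  have hgz : ∀ t ∈ Ioo (-T) T, F r (Real.sinh t) - Real.cosh (2 * r * t) = 0 := by
    intro t ht
    have hd0 : ∀ s ∈ Ioo (-T) T,
        HasDerivAt (fun t => F r (Real.sinh t) - Real.cosh (2 * r * t)) 0 s := by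
      intro s hs
      have := hDg s hs
      rwa [hG1z s hs] at this
    have h1 := const_of_deriv_zero hd0 ht h0mem
    simpa [F_zero] using h1
  -- evaluate at arsinh y
  have ht0 : Real.arsinh y ∈ Ioo (-T) T := by
    obtain ⟨hy1, hy2⟩ := abs_lt.1 hy
    constructor
    · rw [hT]
      have : Real.arsinh (-(1 / 2)) < Real.arsinh y := Real.arsinh_lt_arsinh.2 (by linarith)
      rwa [Real.arsinh_neg] at this
    · rw [hT]
      exact Real.arsinh_lt_arsinh.2 (by linarith)
  have hval : F r y = Real.cosh (2 * r * Real.arsinh y) := by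
    have h1 := hgz _ ht0
    rw [Real.sinh_arsinh, sub_eq_zero] at h1
    exact h1
  -- conclude
  have hy34 : |y| ≤ 3 / 4 := by linarith
  have hsum : HasSum (fun k : ℕ => B r k * y ^ (2 * k)) (F r y) :=
    (summable_F r hy34).hasSum
  rw [hval] at hsum
  have hfun : (fun k : ℕ => coshCoeff r k * (2 * y) ^ (2 * k) / (Nat.factorial (2 * k) : ℝ))
      = fun k : ℕ => B r k * y ^ (2 * k) := by
    funext k
    have h4 : (2 * y) ^ (2 * k) = 4 ^ k * y ^ (2 * k) := by
      rw [mul_pow, pow_mul]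
      norm_num
    rw [CoshAux.B, h4]
    ring
  rw [hfun]
  exact hsum
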